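/- Consider a single-layer GRU with state dimension n_x, weights W_z, W_f, W_r ∈ ℝ^{n_x×n_u}, U_z, U_f, U_r ∈ ℝ^{n_x×n_x}, U_o ∈ ℝ^{n_y×n_x}, biases b_z, b_f, b_r ∈ ℝ^{n_x}, b_o ∈ ℝ^{n_y}, evolving as x_{k+1} = z_k ∘ x_k + (1 − z_k) ∘ r_k with output y_k = U_o x_k + b_o, where z_k = σ(W_z u_k + U_z x_k + b_z), f_k = σ(W_f u_k + U_f x_k + b_f), r_k = tanh(W_r u_k + U_r (f_k ∘ x_k) + b_r), and its Luenberger-like observer with gains L_z, L_f ∈ ℝ^{n_x×n_y}, evolving as x̂_{k+1} = ẑ_k ∘ x̂_k + (1 − ẑ_k) ∘ r̂_k, ŷ_k = U_o x̂_k + b_o, ẑ_k = σ(W_z u_k + U_z x̂_k + b_z + L_z(y_k − ŷ_k)), f̂_k = σ(W_f u_k + U_f x̂_k + b_f + L_f(y_k − ŷ_k)), r̂_k = tanh(W_r u_k + U_r (f̂_k ∘ x̂_k) + b_r). Fix x̌ ≥ 1 and suppose ‖x_0‖_∞ ≤ x̌, ‖x̂_0‖_∞ ≤ x̌, and ‖u_k‖_∞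 ≤ 1 for all k. If there exists λ_o ∈ (0,1) such that κ_o(σ̌_z, L_z, L_f) < λ_o and κ_o(1 − σ̌_z, L_z, L_f) < λ_o, then for every k ∈ ℕ, ‖x̂_k − x_k‖₂ ≤ √(n_x)·λ_o^k·‖x̂_0 − x_0‖₂. -/

import Mathlib

open Matrix

/-- The logistic sigmoid. -/
noncomputable def sigmoid (s : ℝ) : ℝ := 1 / (1 + Real.exp (-s))

/-- ∞-norm on `Fin n → ℝ`. -/
noncomputable def normInf {n : ℕ} (v : Fin n → ℝ) : ℝ := ⨆ i, |v i|

/-- Euclidean norm on `Fin n → ℝ`. -/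
noncomputable def norm2 {n : ℕ} (v : Fin n → ℝ) : ℝ := Real.sqrt (∑ i, v i ^ 2)

/-- Induced ∞-norm of a matrix (maximum absolute row sum). -/
noncomputable def matNormInf {n m : ℕ} (A : Matrix (Fin n) (Fin m) ℝ) : ℝ :=
  ⨆ i, ∑ j, |A i j|

lemma le_iSup_fin {n : ℕ} (f : Fin n → ℝ) (i : Fin n) : f i ≤ ⨆ j, f j :=
  le_ciSup (Set.Finite.bddAbove (Set.finite_range f)) i

lemma sigmoid_pos (s : ℝ) : 0 < sigmoid s := by unfold sigmoid; positivity

lemma sigmoid_lt_one (s : ℝ) : sigmoid s < 1 := by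
  unfold sigmoid
  rw [div_lt_one (by positivity)]
  linarith [Real.exp_pos (-s)]

lemma sigmoid_neg (s : ℝ) : sigmoid (-s) = 1 - sigmoid s := by
  unfold sigmoid
  have he : Real.exp s * Real.exp (-s) = 1 := by rw [← Real.exp_add]; simp
  have h1 : (0:ℝ) < 1 + Real.exp (- -s) := by positivity
  have h2 : (0:ℝ) < 1 + Real.exp (-s) := by positivity
  field_simp
  nlinarith [he]

lemma sigmoid_mono : Monotone sigmoid := by
  intro s t h
  unfold sigmoid
  apply one_div_le_one_div_of_le (by positivity)
  have := Real.exp_le_exp.2 (neg_le_neg h)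
  linarith

lemma sigmoid_hasDerivAt (s : ℝ) :
    HasDerivAt sigmoid (Real.exp (-s) / (1 + Real.exp (-s)) ^ 2) s := by
  have h : HasDerivAt (fun t : ℝ => 1 + Real.exp (-t)) (-Real.exp (-s)) s := by
    have h0 := (Real.hasDerivAt_exp (-s)).comp s (hasDerivAt_neg s)
    simpa using h0.const_add 1
  have h2 := h.inv (by positivity)
  have : sigmoid = fun t : ℝ => (1 + Real.exp (-t))⁻¹ := by
    funext t; simp [sigmoid, one_div]
  rw [this]
  refine h2.congr_deriv ?_
  ring

lemma sigmoid_lipschitz (a b : ℝ) : |sigmoid a - sigmoid b| ≤ (1/4) * |a - b| := by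
  have hdiff : Differentiable ℝ sigmoid := fun s => (sigmoid_hasDerivAt s).differentiableAt
  have hL : LipschitzWith (1/4 : NNReal) sigmoid := by
    apply lipschitzWith_of_nnnorm_deriv_le hdiff
    intro s
    rw [← NNReal.coe_le_coe, coe_nnnorm, (sigmoid_hasDerivAt s).deriv, Real.norm_eq_abs,
      abs_of_nonneg (by positivity)]
    push_cast
    rw [div_le_iff₀ (by positivity)]
    nlinarith [Real.exp_pos (-s), sq_nonneg (1 - Real.exp (-s))]
  have := hL.dist_le_mul a b
  rw [Real.dist_eq, Real.dist_eq] at this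
  refine this.trans_eq ?_
  push_cast
  ring

lemma tanh_hasDerivAt (s : ℝ) : HasDerivAt Real.tanh (1 / Real.cosh s ^ 2) s := by
  have h := (Real.hasDerivAt_sinh s).div (Real.hasDerivAt_cosh s) (Real.cosh_pos s).ne'
  have hk : Real.cosh s * Real.cosh s - Real.sinh s * Real.sinh s = 1 := by
    have := Real.cosh_sq_sub_sinh_sq s; nlinarith [this]
  have ht : Real.tanh = fun t => Real.sinh t / Real.cosh t := by
    funext t; exact Real.tanh_eq_sinh_div_cosh t
  rw [ht]
  refine h.congr_deriv ?_
  rw [hk]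

lemma tanh_lipschitz (a b : ℝ) : |Real.tanh a - Real.tanh b| ≤ |a - b| := by
  have hdiff : Differentiable ℝ Real.tanh := fun s => (tanh_hasDerivAt s).differentiableAt
  have hL : LipschitzWith 1 Real.tanh := by
    apply lipschitzWith_of_nnnorm_deriv_le hdiff
    intro s
    rw [← NNReal.coe_le_coe, coe_nnnorm, (tanh_hasDerivAt s).deriv, Real.norm_eq_abs,
      abs_of_nonneg (by positivity)]
    push_cast
    rw [div_le_one (by positivity)]
    nlinarith [Real.one_le_cosh s]
  have := hL.dist_le_mul a b
  simpa [Real.dist_eq] using this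

lemma tanh_monotone : Monotone Real.tanh := by
  apply StrictMono.monotone
  apply strictMono_of_deriv_pos
  intro s
  rw [(tanh_hasDerivAt s).deriv]
  positivity

lemma abs_tanh_le_tanh {a b : ℝ} (h : |a| ≤ b) : |Real.tanh a| ≤ Real.tanh b := by
  rw [abs_le] at h ⊢
  constructor
  · have : Real.tanh (-b) ≤ Real.tanh a := tanh_monotone h.1
    rwa [Real.tanh_neg] at this
  · exact tanh_monotone h.2

lemma abs_tanh_le_one (a : ℝ) : |Real.tanh a| ≤ 1 := by
  rw [abs_le, Real.tanh_eq_sinh_div_cosh]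
  have hc := Real.cosh_pos a
  constructor
  · rw [le_div_iff₀ hc]
    nlinarith [Real.cosh_sub_sinh (-a), Real.exp_pos (-(-a)), Real.sinh_neg a, Real.cosh_neg a]
  · rw [div_le_one hc]
    linarith [Real.sinh_lt_cosh a]

lemma abs_mulVec_le {n m : ℕ} (A : Matrix (Fin n) (Fin m) ℝ) (v : Fin m → ℝ) {c : ℝ}
    (hc : 0 ≤ c) (hv : ∀ j, |v j| ≤ c) (i : Fin n) : |A.mulVec v i| ≤ (∑ j, |A i j|) * c := by
  have : A.mulVec v i = ∑ j, A i j * v j := by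
    simp [Matrix.mulVec, dotProduct]
  rw [this]
  calc |∑ j, A i j * v j| ≤ ∑ j, |A i j * v j| := Finset.abs_sum_le_sum_abs _ _
    _ ≤ ∑ j, |A i j| * c := by
        apply Finset.sum_le_sum
        intro j _
        rw [abs_mul]
        exact mul_le_mul_of_nonneg_left (hv j) (abs_nonneg _)
    _ = (∑ j, |A i j|) * c := (Finset.sum_mul _ _ _).symm

lemma abs_mulVec_le' {n m : ℕ} (A : Matrix (Fin n) (Fin m) ℝ) (v : Fin m → ℝ) {c : ℝ}
    (hc : 0 ≤ c) (hv : ∀ j, |v j| ≤ c) (i : Fin n) : |A.mulVec v i| ≤ matNormInf A * c := by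
  have hr : (∑ j, |A i j|) ≤ matNormInf A := le_iSup_fin (fun i => ∑ j, |A i j|) i
  exact (abs_mulVec_le A v hc hv i).trans (mul_le_mul_of_nonneg_right hr hc)

lemma matNormInf_nonneg {n m : ℕ} [Nonempty (Fin n)] (A : Matrix (Fin n) (Fin m) ℝ) :
    0 ≤ matNormInf A := by
  obtain ⟨i⟩ := ‹Nonempty (Fin n)›
  exact (Finset.sum_nonneg fun j _ => abs_nonneg _).trans
    (le_iSup_fin (fun i => ∑ j, |A i j|) i)

lemma convex_step_bound (z xv t c : ℝ) (hz0 : 0 < z) (hz1 : z < 1) (hx : |xv| ≤ c)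
    (ht : |t| ≤ 1) (hc : 1 ≤ c) : |z * xv + (1 - z) * t| ≤ c := by
  have h1 : |z * xv + (1 - z) * t| ≤ z * |xv| + (1 - z) * |t| := by
    calc |z * xv + (1 - z) * t| ≤ |z * xv| + |(1 - z) * t| := abs_add_le _ _
      _ = z * |xv| + (1 - z) * |t| := by
          rw [abs_mul, abs_mul, abs_of_pos hz0, abs_of_pos (by linarith : (0:ℝ) < 1 - z)]
  nlinarith [abs_nonneg xv, abs_nonneg t]

lemma error_decomp_bound {zj zhj xj xhj rj rhj N c2 c3 c4 lamo : ℝ}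
    (h1 : |xhj - xj| ≤ N) (hz0 : 0 < zj) (hz1 : zj < 1)
    (h2 : |zhj - zj| ≤ c2) (h3 : |xhj - rhj| ≤ c3) (h4 : |rhj - rj| ≤ c4)
    (hfin : zj * N + c2 * c3 + (1 - zj) * c4 ≤ lamo * N) :
    |zhj * xhj + (1 - zhj) * rhj - (zj * xj + (1 - zj) * rj)| ≤ lamo * N := by
  have hid : zhj * xhj + (1 - zhj) * rhj - (zj * xj + (1 - zj) * rj)
      = zj * (xhj - xj) + (zhj - zj) * (xhj - rhj) + (1 - zj) * (rhj - rj) := by ring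
  rw [hid]
  have ha := abs_add_three (zj * (xhj - xj)) ((zhj - zj) * (xhj - rhj)) ((1 - zj) * (rhj - rj))
  rw [abs_mul, abs_mul, abs_mul, abs_of_pos hz0,
    abs_of_pos (by linarith : (0:ℝ) < 1 - zj)] at ha
  have b1 : zj * |xhj - xj| ≤ zj * N := mul_le_mul_of_nonneg_left h1 hz0.le
  have b2 : |zhj - zj| * |xhj - rhj| ≤ c2 * c3 :=
    mul_le_mul h2 h3 (abs_nonneg _) ((abs_nonneg _).trans h2)
  have b3 : (1 - zj) * |rhj - rj| ≤ (1 - zj) * c4 :=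
    mul_le_mul_of_nonneg_left h4 (by linarith)
  linarith

lemma norm2_le_sqrt_mul_normInf {n : ℕ} [Nonempty (Fin n)] (v : Fin n → ℝ) :
    norm2 v ≤ Real.sqrt n * normInf v := by
  have hN0 : 0 ≤ normInf v :=
    (abs_nonneg _).trans (le_iSup_fin (fun i => |v i|) (Classical.arbitrary _))
  have h1 : ∑ i, v i ^ 2 ≤ (n : ℝ) * normInf v ^ 2 := by
    calc ∑ i, v i ^ 2 ≤ ∑ _i : Fin n, normInf v ^ 2 := by
          apply Finset.sum_le_sum
          intro i _
          have h : |v i| ≤ normInf v := le_iSup_fin (fun i => |v i|) i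
          calc v i ^ 2 = |v i| ^ 2 := (sq_abs _).symm
            _ ≤ normInf v ^ 2 := by nlinarith [abs_nonneg (v i)]
      _ = (n : ℝ) * normInf v ^ 2 := by
          rw [Finset.sum_const, Finset.card_univ, Fintype.card_fin, nsmul_eq_mul]
  calc norm2 v = Real.sqrt (∑ i, v i ^ 2) := rfl
    _ ≤ Real.sqrt ((n : ℝ) * normInf v ^ 2) := Real.sqrt_le_sqrt h1
    _ = Real.sqrt n * normInf v := by
        rw [Real.sqrt_mul (Nat.cast_nonneg n), Real.sqrt_sq hN0]

lemma normInf_le_norm2 {n : ℕ} (v : Fin n → ℝ) : normInf v ≤ norm2 v := by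
  rcases isEmpty_or_nonempty (Fin n) with h | h
  · unfold normInf norm2
    rw [iSup_of_empty']
    simp only [Real.sSup_empty]
    positivity
  · apply ciSup_le
    intro i
    have h1 : v i ^ 2 ≤ ∑ j, v j ^ 2 :=
      Finset.single_le_sum (fun j _ => sq_nonneg (v j)) (Finset.mem_univ i)
    calc |v i| = Real.sqrt (v i ^ 2) := (Real.sqrt_sq_eq_abs _).symm
      _ ≤ Real.sqrt (∑ j, v j ^ 2) := Real.sqrt_le_sqrt h1
/-- the Luenberger-like GRU observer is a weak exponential
observer with overshoot `√n_x` and rate `λ_o` (Theorem 2). -/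
theorem stmt_13 {nx nu ny : ℕ}
    (Wz Wf Wr : Matrix (Fin nx) (Fin nu) ℝ)
    (Uz Uf Ur : Matrix (Fin nx) (Fin nx) ℝ)
    (Uo : Matrix (Fin ny) (Fin nx) ℝ)
    (bz bf br : Fin nx → ℝ) (bo : Fin ny → ℝ)
    (Lz Lf : Matrix (Fin nx) (Fin ny) ℝ)
    (xcheck : ℝ) (hxc : 1 ≤ xcheck)
    (u : ℕ → Fin nu → ℝ) (hu : ∀ k, normInf (u k) ≤ 1)
    (x xhat : ℕ → Fin nx → ℝ)
    (hx0 : normInf (x 0) ≤ xcheck) (hxhat0 : normInf (xhat 0) ≤ xcheck)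
    -- system dynamics
    (hxdyn : ∀ k : ℕ,
      x (k + 1) = fun j =>
        (sigmoid ((Wz.mulVec (u k) + Uz.mulVec (x k) + bz) j)) * x k j +
        (1 - sigmoid ((Wz.mulVec (u k) + Uz.mulVec (x k) + bz) j)) *
          Real.tanh ((Wr.mulVec (u k) +
            Ur.mulVec (fun i => sigmoid ((Wf.mulVec (u k) + Uf.mulVec (x k) + bf) i) * x k i) +
            br) j))
    -- observer dynamics, driven by the innovation `y_k - ŷ_k = U_o x_k - U_o x̂_k`
    (hxhatdyn : ∀ k : ℕ,
      xhat (k + 1) = fun j =>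
        (sigmoid ((Wz.mulVec (u k) + Uz.mulVec (xhat k) + bz +
            Lz.mulVec ((Uo.mulVec (x k) + bo) - (Uo.mulVec (xhat k) + bo))) j)) * xhat k j +
        (1 - sigmoid ((Wz.mulVec (u k) + Uz.mulVec (xhat k) + bz +
            Lz.mulVec ((Uo.mulVec (x k) + bo) - (Uo.mulVec (xhat k) + bo))) j)) *
          Real.tanh ((Wr.mulVec (u k) +
            Ur.mulVec (fun i =>
              sigmoid ((Wf.mulVec (u k) + Uf.mulVec (xhat k) + bf +
                Lf.mulVec ((Uo.mulVec (x k) + bo) - (Uo.mulVec (xhat k) + bo))) i) * xhat k i) +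
            br) j))
    (sigz : ℝ) (hsigz : sigz = sigmoid (⨆ i, (∑ j, |Wz i j| + xcheck * ∑ j, |Uz i j| + |bz i|)))
    (sigf : ℝ) (hsigf : sigf = sigmoid (⨆ i, (∑ j, |Wf i j| + xcheck * ∑ j, |Uf i j| + |bf i|)))
    (phir : ℝ) (hphir : phir = Real.tanh (⨆ i, (∑ j, |Wr i j| + xcheck * ∑ j, |Ur i j| + |br i|)))
    (kappao : ℝ → ℝ)
    (hkappao : ∀ z : ℝ, kappao z =
      z + (1 - z) * ((1 / 4) * xcheck * matNormInf (Uf - Lf * Uo) + sigf) * matNormInf Ur +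
        (1 / 4) * (phir + xcheck) * matNormInf (Uz - Lz * Uo))
    (lamo : ℝ) (hlamo0 : 0 < lamo) (hlamo1 : lamo < 1)
    (hcond1 : kappao sigz < lamo) (hcond2 : kappao (1 - sigz) < lamo) :
    ∀ k : ℕ, norm2 (xhat k - x k) ≤ Real.sqrt nx * lamo ^ k * norm2 (xhat 0 - x 0) := by
  rcases Nat.eq_zero_or_pos nx with hnx0 | hnxpos
  · subst hnx0
    intro k
    simp [norm2]
  haveI hne : Nonempty (Fin nx) := Fin.pos_iff_nonempty.1 hnxpos
  have hxc0 : (0:ℝ) ≤ xcheck := by linarith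
  have hu' : ∀ k i, |u k i| ≤ 1 := by
    intro k i
    have h : |u k i| ≤ normInf (u k) := le_iSup_fin (fun i => |u k i|) i
    exact h.trans (hu k)
  -- state invariance
  have hxb : ∀ k i, |x k i| ≤ xcheck := by
    intro k
    induction k with
    | zero =>
      intro i
      have h : |x 0 i| ≤ normInf (x 0) := le_iSup_fin (fun i => |x 0 i|) i
      exact h.trans hx0
    | succ k ih =>
      intro j
      simp only [hxdyn k]
      exact convex_step_bound _ _ _ _ (sigmoid_pos _) (sigmoid_lt_one _) (ih j)
        (abs_tanh_le_one _) hxc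
  have hxhb : ∀ k i, |xhat k i| ≤ xcheck := by
    intro k
    induction k with
    | zero =>
      intro i
      have h : |xhat 0 i| ≤ normInf (xhat 0) := le_iSup_fin (fun i => |xhat 0 i|) i
      exact h.trans hxhat0
    | succ k ih =>
      intro j
      simp only [hxhatdyn k]
      exact convex_step_bound _ _ _ _ (sigmoid_pos _) (sigmoid_lt_one _) (ih j)
        (abs_tanh_le_one _) hxc
  have hsigf0 : 0 < sigf := hsigf ▸ sigmoid_pos _
  have hMAz0 : 0 ≤ matNormInf (Uz - Lz * Uo) := matNormInf_nonneg _
  have hMAf0 : 0 ≤ matNormInf (Uf - Lf * Uo) := matNormInf_nonneg _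
  have hMUr0 : 0 ≤ matNormInf Ur := matNormInf_nonneg _
  -- endpoint condition implies kappao ≤ lamo on the gate interval
  have hkz : ∀ t : ℝ, 1 - sigz ≤ t → t ≤ sigz → kappao t ≤ lamo := by
    intro t h1 h2
    rw [hkappao] at hcond1 hcond2 ⊢
    rcases le_total (((1 / 4) * xcheck * matNormInf (Uf - Lf * Uo) + sigf) * matNormInf Ur) 1
      with h | h
    · nlinarith [mul_nonneg (sub_nonneg.2 h2) (sub_nonneg.2 h)]
    · nlinarith [mul_nonneg (sub_nonneg.2 h1) (sub_nonneg.2 h)]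
  -- one-step contraction of the error in the ∞-norm
  have key : ∀ k, normInf (xhat (k+1) - x (k+1)) ≤ lamo * normInf (xhat k - x k) := by
    intro k
    have hd := hxdyn k
    have hdh := hxhatdyn k
    set N := normInf (xhat k - x k) with hNdef
    have heN' : ∀ i, |xhat k i - x k i| ≤ N := by
      intro i
      rw [hNdef]
      have h : |(xhat k - x k) i| ≤ normInf (xhat k - x k) :=
        le_iSup_fin (fun j => |(xhat k - x k) j|) i
      simpa using h
    have hN0 : 0 ≤ N := (abs_nonneg _).trans (heN' (Classical.arbitrary _))
    set innov : Fin ny → ℝ := (Uo.mulVec (x k) + bo) - (Uo.mulVec (xhat k) + bo) with hidef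
    set az : Fin nx → ℝ := Wz.mulVec (u k) + Uz.mulVec (x k) + bz with hazd
    set azh : Fin nx → ℝ := Wz.mulVec (u k) + Uz.mulVec (xhat k) + bz + Lz.mulVec innov
      with hazhd
    set af : Fin nx → ℝ := Wf.mulVec (u k) + Uf.mulVec (x k) + bf with hafd
    set afh : Fin nx → ℝ := Wf.mulVec (u k) + Uf.mulVec (xhat k) + bf + Lf.mulVec innov
      with hafhd
    set ar : Fin nx → ℝ := Wr.mulVec (u k) + Ur.mulVec (fun i => sigmoid (af i) * x k i) + br
      with hard
    set arh : Fin nx → ℝ :=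
      Wr.mulVec (u k) + Ur.mulVec (fun i => sigmoid (afh i) * xhat k i) + br with harhd
    -- bounds on the z-gate argument
    have hazb : ∀ j, |az j| ≤ ⨆ i, (∑ l, |Wz i l| + xcheck * ∑ l, |Uz i l| + |bz i|) := by
      intro j
      have h1 : |Wz.mulVec (u k) j| ≤ (∑ l, |Wz j l|) * 1 :=
        abs_mulVec_le Wz (u k) zero_le_one (hu' k) j
      have h2 : |Uz.mulVec (x k) j| ≤ xcheck * ∑ l, |Uz j l| := by
        calc |Uz.mulVec (x k) j| ≤ (∑ l, |Uz j l|) * xcheck :=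
              abs_mulVec_le Uz (x k) hxc0 (hxb k) j
          _ = xcheck * ∑ l, |Uz j l| := mul_comm _ _
      have h3 : (∑ l, |Wz j l| + xcheck * ∑ l, |Uz j l| + |bz j|)
          ≤ ⨆ i, (∑ l, |Wz i l| + xcheck * ∑ l, |Uz i l| + |bz i|) :=
        le_iSup_fin (fun i => ∑ l, |Wz i l| + xcheck * ∑ l, |Uz i l| + |bz i|) j
      have h4 : |az j| ≤ |Wz.mulVec (u k) j| + |Uz.mulVec (x k) j| + |bz j| := by
        rw [hazd]
        simp only [Pi.add_apply]
        exact abs_add_three _ _ _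
      linarith
    have hzle : ∀ j, sigmoid (az j) ≤ sigz := by
      intro j
      rw [hsigz]
      exact sigmoid_mono ((le_abs_self _).trans (hazb j))
    have hzge : ∀ j, 1 - sigz ≤ sigmoid (az j) := by
      intro j
      have h := sigmoid_mono (neg_le_of_abs_le (hazb j))
      rw [sigmoid_neg] at h
      rw [hsigz]
      linarith
    -- bound on the f-gate
    have hfle : ∀ i, sigmoid (af i) ≤ sigf := by
      intro i
      have h1 : |Wf.mulVec (u k) i| ≤ (∑ l, |Wf i l|) * 1 :=
        abs_mulVec_le Wf (u k) zero_le_one (hu' k) i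
      have h2 : |Uf.mulVec (x k) i| ≤ xcheck * ∑ l, |Uf i l| := by
        calc |Uf.mulVec (x k) i| ≤ (∑ l, |Uf i l|) * xcheck :=
              abs_mulVec_le Uf (x k) hxc0 (hxb k) i
          _ = xcheck * ∑ l, |Uf i l| := mul_comm _ _
      have h3 : (∑ l, |Wf i l| + xcheck * ∑ l, |Uf i l| + |bf i|)
          ≤ ⨆ i, (∑ l, |Wf i l| + xcheck * ∑ l, |Uf i l| + |bf i|) :=
        le_iSup_fin (fun i => ∑ l, |Wf i l| + xcheck * ∑ l, |Uf i l| + |bf i|) i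
      have h4 : af i ≤ |Wf.mulVec (u k) i| + |Uf.mulVec (x k) i| + |bf i| := by
        rw [hafd]
        simp only [Pi.add_apply]
        exact (le_abs_self _).trans (abs_add_three _ _ _)
      rw [hsigf]
      exact sigmoid_mono (by linarith)
    -- bound on the r gates
    have hrb : ∀ (w : Fin nx → ℝ) (a : Fin nx → ℝ),
        (∀ i, |w i| ≤ xcheck) →
        (a = Wr.mulVec (u k) + Ur.mulVec w + br) →
        ∀ j, |Real.tanh (a j)| ≤ phir := by
      intro w a hw ha j
      have h1 : |Wr.mulVec (u k) j| ≤ (∑ l, |Wr j l|) * 1 :=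
        abs_mulVec_le Wr (u k) zero_le_one (hu' k) j
      have h2 : |Ur.mulVec w j| ≤ xcheck * ∑ l, |Ur j l| := by
        calc |Ur.mulVec w j| ≤ (∑ l, |Ur j l|) * xcheck := abs_mulVec_le Ur w hxc0 hw j
          _ = xcheck * ∑ l, |Ur j l| := mul_comm _ _
      have h3 : (∑ l, |Wr j l| + xcheck * ∑ l, |Ur j l| + |br j|)
          ≤ ⨆ i, (∑ l, |Wr i l| + xcheck * ∑ l, |Ur i l| + |br i|) :=
        le_iSup_fin (fun i => ∑ l, |Wr i l| + xcheck * ∑ l, |Ur i l| + |br i|) j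
      have h4 : |a j| ≤ |Wr.mulVec (u k) j| + |Ur.mulVec w j| + |br j| := by
        rw [ha]
        simp only [Pi.add_apply]
        exact abs_add_three _ _ _
      rw [hphir]
      exact abs_tanh_le_tanh (by linarith)
    have hfx : ∀ i, |sigmoid (af i) * x k i| ≤ xcheck := by
      intro i
      rw [abs_mul, abs_of_pos (sigmoid_pos _)]
      nlinarith [sigmoid_pos (af i), sigmoid_lt_one (af i), hxb k i, abs_nonneg (x k i)]
    have hfxh : ∀ i, |sigmoid (afh i) * xhat k i| ≤ xcheck := by
      intro i
      rw [abs_mul, abs_of_pos (sigmoid_pos _)]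
      nlinarith [sigmoid_pos (afh i), sigmoid_lt_one (afh i), hxhb k i, abs_nonneg (xhat k i)]
    have harb : ∀ j, |Real.tanh (ar j)| ≤ phir := hrb _ _ hfx hard
    have harhb : ∀ j, |Real.tanh (arh j)| ≤ phir := hrb _ _ hfxh harhd
    -- gate argument differences
    have hAzd : ∀ j, azh j - az j = (Uz - Lz * Uo).mulVec (xhat k - x k) j := by
      intro j
      rw [hazhd, hazd, hidef]
      simp only [Matrix.sub_mulVec, Matrix.mulVec_sub, Matrix.mulVec_add,
        ← Matrix.mulVec_mulVec, Pi.add_apply, Pi.sub_apply]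
      ring
    have hAfd : ∀ j, afh j - af j = (Uf - Lf * Uo).mulVec (xhat k - x k) j := by
      intro j
      rw [hafhd, hafd, hidef]
      simp only [Matrix.sub_mulVec, Matrix.mulVec_sub, Matrix.mulVec_add,
        ← Matrix.mulVec_mulVec, Pi.add_apply, Pi.sub_apply]
      ring
    have hArd : ∀ j, arh j - ar j =
        Ur.mulVec (fun i => sigmoid (afh i) * xhat k i - sigmoid (af i) * x k i) j := by
      intro j
      rw [harhd, hard]
      have hfun : (fun i => sigmoid (afh i) * xhat k i - sigmoid (af i) * x k i)
          = (fun i => sigmoid (afh i) * xhat k i) - fun i => sigmoid (af i) * x k i := rfl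
      rw [hfun, Matrix.mulVec_sub]
      simp only [Pi.add_apply, Pi.sub_apply]
      ring
    have heNsub : ∀ i, |(xhat k - x k) i| ≤ N := fun i => by simpa using heN' i
    -- componentwise bounds for the decomposition
    have hb2 : ∀ j, |sigmoid (azh j) - sigmoid (az j)|
        ≤ (1/4) * (matNormInf (Uz - Lz * Uo) * N) := by
      intro j
      calc |sigmoid (azh j) - sigmoid (az j)| ≤ (1/4) * |azh j - az j| := sigmoid_lipschitz _ _
        _ ≤ (1/4) * (matNormInf (Uz - Lz * Uo) * N) := by
            rw [hAzd j]
            have h := abs_mulVec_le' (Uz - Lz * Uo) (xhat k - x k) hN0 heNsub j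
            linarith
    have hb3 : ∀ j, |xhat k j - Real.tanh (arh j)| ≤ xcheck + phir := by
      intro j
      calc |xhat k j - Real.tanh (arh j)|
          = |xhat k j + -(Real.tanh (arh j))| := by rw [sub_eq_add_neg]
        _ ≤ |xhat k j| + |(-(Real.tanh (arh j)))| := abs_add_le _ _
        _ = |xhat k j| + |Real.tanh (arh j)| := by rw [abs_neg]
        _ ≤ xcheck + phir := add_le_add (hxhb k j) (harhb j)
    have hCn : 0 ≤ (sigf + (1/4) * (matNormInf (Uf - Lf * Uo) * xcheck)) * N :=
      mul_nonneg (add_nonneg hsigf0.le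
        (mul_nonneg (by norm_num) (mul_nonneg hMAf0 hxc0))) hN0
    have hb4 : ∀ j, |Real.tanh (arh j) - Real.tanh (ar j)|
        ≤ matNormInf Ur * ((sigf + (1/4) * (matNormInf (Uf - Lf * Uo) * xcheck)) * N) := by
      intro j
      have hg : ∀ i, |sigmoid (afh i) * xhat k i - sigmoid (af i) * x k i|
          ≤ (sigf + (1/4) * (matNormInf (Uf - Lf * Uo) * xcheck)) * N := by
        intro i
        have e1 : sigmoid (afh i) * xhat k i - sigmoid (af i) * x k i
            = sigmoid (af i) * (xhat k i - x k i)
              + (sigmoid (afh i) - sigmoid (af i)) * xhat k i := by ring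
        have b1 : |sigmoid (af i) * (xhat k i - x k i)| ≤ sigf * N := by
          rw [abs_mul, abs_of_pos (sigmoid_pos _)]
          exact mul_le_mul (hfle i) (heN' i) (abs_nonneg _) hsigf0.le
        have b2' : |sigmoid (afh i) - sigmoid (af i)|
            ≤ (1/4) * (matNormInf (Uf - Lf * Uo) * N) := by
          calc |sigmoid (afh i) - sigmoid (af i)| ≤ (1/4) * |afh i - af i| :=
                sigmoid_lipschitz _ _
            _ ≤ (1/4) * (matNormInf (Uf - Lf * Uo) * N) := by
                rw [hAfd i]
                have h := abs_mulVec_le' (Uf - Lf * Uo) (xhat k - x k) hN0 heNsub i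
                linarith
        have b2 : |(sigmoid (afh i) - sigmoid (af i)) * xhat k i|
            ≤ (1/4) * (matNormInf (Uf - Lf * Uo) * N) * xcheck := by
          rw [abs_mul]
          exact mul_le_mul b2' (hxhb k i) (abs_nonneg _)
            (mul_nonneg (by norm_num) (mul_nonneg hMAf0 hN0))
        rw [e1]
        calc |sigmoid (af i) * (xhat k i - x k i)
              + (sigmoid (afh i) - sigmoid (af i)) * xhat k i|
            ≤ |sigmoid (af i) * (xhat k i - x k i)|
              + |(sigmoid (afh i) - sigmoid (af i)) * xhat k i| := abs_add_le _ _
          _ ≤ sigf * N + (1/4) * (matNormInf (Uf - Lf * Uo) * N) * xcheck := add_le_add b1 b2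
          _ = (sigf + (1/4) * (matNormInf (Uf - Lf * Uo) * xcheck)) * N := by ring
      calc |Real.tanh (arh j) - Real.tanh (ar j)| ≤ |arh j - ar j| := tanh_lipschitz _ _
        _ = |Ur.mulVec (fun i => sigmoid (afh i) * xhat k i - sigmoid (af i) * x k i) j| := by
            rw [hArd j]
        _ ≤ matNormInf Ur * ((sigf + (1/4) * (matNormInf (Uf - Lf * Uo) * xcheck)) * N) :=
            abs_mulVec_le' Ur _ hCn hg j
    -- combine
    have hfin : ∀ j, sigmoid (az j) * N
        + ((1/4) * (matNormInf (Uz - Lz * Uo) * N)) * (xcheck + phir)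
        + (1 - sigmoid (az j))
          * (matNormInf Ur * ((sigf + (1/4) * (matNormInf (Uf - Lf * Uo) * xcheck)) * N))
        ≤ lamo * N := by
      intro j
      have hins : kappao (sigmoid (az j)) ≤ lamo := hkz _ (hzge j) (hzle j)
      rw [hkappao] at hins
      have hp := mul_le_mul_of_nonneg_right hins hN0
      nlinarith [hp]
    have hstep : ∀ j, |xhat (k+1) j - x (k+1) j| ≤ lamo * N := by
      intro j
      simp only [hdh, hd]
      exact error_decomp_bound (heN' j) (sigmoid_pos _) (sigmoid_lt_one _) (hb2 j) (hb3 j)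
        (hb4 j) (hfin j)
    show normInf (xhat (k+1) - x (k+1)) ≤ lamo * N
    apply ciSup_le
    intro j
    simpa using hstep j
  -- iterate the contraction
  have hNrec : ∀ k, normInf (xhat k - x k) ≤ lamo ^ k * normInf (xhat 0 - x 0) := by
    intro k
    induction k with
    | zero => simp
    | succ k ih =>
      calc normInf (xhat (k+1) - x (k+1)) ≤ lamo * normInf (xhat k - x k) := key k
        _ ≤ lamo * (lamo ^ k * normInf (xhat 0 - x 0)) :=
            mul_le_mul_of_nonneg_left ih hlamo0.le
        _ = lamo ^ (k+1) * normInf (xhat 0 - x 0) := by ring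
  intro k
  calc norm2 (xhat k - x k) ≤ Real.sqrt nx * normInf (xhat k - x k) :=
        norm2_le_sqrt_mul_normInf _
    _ ≤ Real.sqrt nx * (lamo ^ k * normInf (xhat 0 - x 0)) :=
        mul_le_mul_of_nonneg_left (hNrec k) (Real.sqrt_nonneg _)
    _ ≤ Real.sqrt nx * (lamo ^ k * norm2 (xhat 0 - x 0)) :=
        mul_le_mul_of_nonneg_left
          (mul_le_mul_of_nonneg_left (normInf_le_norm2 _) (pow_nonneg hlamo0.le k))
          (Real.sqrt_nonneg _)
    _ = Real.sqrt nx * lamo ^ k * norm2 (xhat 0 - x 0) := by ring
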